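/- Every substitution subterm arising during λ_lca reduction of an initialised term is closed: if T is an initialised labelled λ_c-term satisfying the linearity constraints and T →_lca* T', then every subterm of T' of the form M[N/x] satisfies FV(N) = ∅; moreover T' satisfies the linearity constraints and FV(T') = FV(T). -/

import Mathlib

/-- Exponential markers E ∈ {D, !, ?, R, S, W}. -/
inductive Marker : Type
  | D | bang | quest | R | S | W
deriving DecidableEq, Repr

/-- Labels: α, β ::= a | α·β | overline α | underline α | →E | ←E. -/
inductive Lab : Type
  | atom : ℕ → Lab
  | comp : Lab → Lab → Lab
  | over : Lab → Lab
  | under : Lab → Lab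
  | fwd : Marker → Lab
  | bwd : Marker → Lab
deriving DecidableEq, Repr

/-- Label reversal (·)^r. -/
def Lab.rev : Lab → Lab
  | .atom a => .atom a
  | .comp α β => .comp β.rev α.rev
  | .over α => .over α.rev
  | .under α => .under α.rev
  | .fwd E => .bwd E
  | .bwd E => .fwd E

/-- Labelled λ_c-terms: variables, abstractions and applications carry a label;
δ-, ε- and substitution terms carry no label.  `sub M N x` is M[N/x],
`dup x y z M` is δ_x^{y,z}.M and `eps x M` is ε_x.M. -/
inductive Term : Type
  | var : ℕ → Lab → Term
  | lam : ℕ → Term → Lab → Term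
  | app : Term → Term → Lab → Term
  | eps : ℕ → Term → Term
  | dup : ℕ → ℕ → ℕ → Term → Term
  | sub : Term → Term → ℕ → Term
deriving DecidableEq, Repr

/-- Free variables. -/
def FV : Term → Finset ℕ
  | .var x _ => {x}
  | .lam x M _ => FV M \ {x}
  | .app M N _ => FV M ∪ FV N
  | .eps x M => FV M ∪ {x}
  | .dup x y z M => (FV M \ {y, z}) ∪ {x}
  | .sub M N x => (FV M \ {x}) ∪ FV N

/-- The linearity (variable) constraints on λ_c-terms. -/
def Wf : Term → Prop
  | .var _ _ => True
  | .lam x M _ => x ∈ FV M ∧ Wf M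
  | .app M N _ => FV M ∩ FV N = ∅ ∧ Wf M ∧ Wf N
  | .eps x M => x ∉ FV M ∧ Wf M
  | .dup x y z M => x ∉ FV M ∧ y ≠ z ∧ y ∈ FV M ∧ z ∈ FV M ∧ Wf M
  | .sub M N x => x ∈ FV M ∧ (FV M \ {x}) ∩ FV N = ∅ ∧ Wf M ∧ Wf N

/-- The prefixing operation β • T. -/
def pre (β : Lab) : Term → Term
  | .var x α => .var x (.comp β α)
  | .lam x M α => .lam x M (.comp β α)
  | .app M N α => .app M N (.comp β α)
  | .eps x M => .eps x (pre β M)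
  | .dup x y z M => .dup x y z (pre β M)
  | .sub M N x => .sub (pre β M) N x

/-- The substitution (σ) rules of λ_lcf, applied at the root. -/
inductive SigmaLcf : Term → Term → Prop
  | lam {y M α N x} : FV N = ∅ →
      SigmaLcf (.sub (.lam y M α) N x) (.lam y (.sub M (pre (.fwd .quest) N) x) α)
  | app1 {M N α P x} : x ∈ FV M →
      SigmaLcf (.sub (.app M N α) P x) (.app (.sub M P x) N α)
  | app2 {M N α P x} : x ∈ FV N →
      SigmaLcf (.sub (.app M N α) P x) (.app M (.sub N P x) α)
  | cpy1 {x y z M N} : FV N = ∅ →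
      SigmaLcf (.sub (.dup x y z M) N x)
        (.sub (.sub M (pre (.fwd .R) N) y) (pre (.fwd .S) N) z)
  | cpy2 {x y z M N x'} : x' ≠ x →
      SigmaLcf (.sub (.dup x y z M) N x') (.dup x y z (.sub M N x'))
  | ers1 {x M N} : FV N = ∅ →
      SigmaLcf (.sub (.eps x M) N x) M
  | ers2 {x M N x'} : x' ≠ x →
      SigmaLcf (.sub (.eps x M) N x') (.eps x (.sub M N x'))
  | var {x α N} :
      SigmaLcf (.sub (.var x α) N x) (pre α N)
  | cmp {M P y N x} : x ∈ FV P →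
      SigmaLcf (.sub (.sub M P y) N x) (.sub M (.sub P N x) y)

/-- The label →D·α·←! used in the Beta rule of λ_lcf. -/
def dPhi (α : Lab) : Lab := .comp (.fwd .D) (.comp α (.bwd .bang))

/-- The Beta rule of λ_lcf, applied at the root:
((λx.M)^α N)^β → β·overline(→D·α·←!) • M[underline((→D·α·←!)^r) • N / x],
provided the function part is closed. -/
inductive BetaLcf : Term → Term → Prop
  | beta {x M α N β} : FV (Term.lam x M α) = ∅ →
      BetaLcf (.app (.lam x M α) N β)
        (pre (.comp β (.over (dPhi α)))
          (.sub M (pre (.under (Lab.rev (dPhi α))) N) x))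

/-- Closure of a root relation under arbitrary contexts. -/
inductive Ctx (r : Term → Term → Prop) : Term → Term → Prop
  | base {M N} : r M N → Ctx r M N
  | lam {x M M' α} : Ctx r M M' → Ctx r (.lam x M α) (.lam x M' α)
  | appL {M M' N α} : Ctx r M M' → Ctx r (.app M N α) (.app M' N α)
  | appR {M N N' α} : Ctx r N N' → Ctx r (.app M N α) (.app M N' α)
  | eps {x M M'} : Ctx r M M' → Ctx r (.eps x M) (.eps x M')
  | dup {x y z M M'} : Ctx r M M' → Ctx r (.dup x y z M) (.dup x y z M')
  | subL {M M' N x} : Ctx r M M' → Ctx r (.sub M N x) (.sub M' N x)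
  | subR {M N N' x} : Ctx r N N' → Ctx r (.sub M N x) (.sub M N' x)

/-- One-step σ-reduction of λ_lcf (context closure of the σ-rules). -/
def SigmaStep : Term → Term → Prop := Ctx SigmaLcf

/-- One-step Beta-reduction of λ_lcf (context closure of the Beta rule). -/
def BetaStep : Term → Term → Prop := Ctx BetaLcf

/-- One-step reduction →_lcf. -/
def LcfStep : Term → Term → Prop := Ctx (fun M N => BetaLcf M N ∨ SigmaLcf M N)

/-- The subterm relation. -/
inductive Subterm : Term → Term → Prop
  | refl (t) : Subterm t t
  | lam {s M x α} : Subterm s M → Subterm s (.lam x M α)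
  | appL {s M N α} : Subterm s M → Subterm s (.app M N α)
  | appR {s M N α} : Subterm s N → Subterm s (.app M N α)
  | eps {s x M} : Subterm s M → Subterm s (.eps x M)
  | dup {s x y z M} : Subterm s M → Subterm s (.dup x y z M)
  | subL {s M N x} : Subterm s M → Subterm s (.sub M N x)
  | subR {s M N x} : Subterm s N → Subterm s (.sub M N x)

/-- The external label of a term. -/
def elabel : Term → Lab
  | .var _ α => α
  | .lam _ _ α => α
  | .app _ _ α => α
  | .eps _ M => elabel M
  | .dup _ _ _ M => elabel M
  | .sub M _ _ => elabel M

/-- The list of labels carried by the variable, abstraction and application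
subterms of a term. -/
def labelsOf : Term → List Lab
  | .var _ α => [α]
  | .lam _ M α => α :: labelsOf M
  | .app M N α => α :: (labelsOf M ++ labelsOf N)
  | .eps _ M => labelsOf M
  | .dup _ _ _ M => labelsOf M
  | .sub M N _ => labelsOf M ++ labelsOf N

/-- A term is initialised when every variable, abstraction and application
subterm carries a single atomic label, these atomic labels are pairwise
distinct (hence no exponential markers occur). -/
def Initialised (T : Term) : Prop :=
  (∀ l ∈ labelsOf T, ∃ a, l = Lab.atom a) ∧ (labelsOf T).Nodup

/-- A label read as the sequence of its atomic symbols (atomic labels and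
exponential markers), ignoring the over/underline bracketing structure. -/
def Lab.atoms : Lab → List Lab
  | .atom a => [.atom a]
  | .comp α β => α.atoms ++ β.atoms
  | .over α => α.atoms
  | .under α => α.atoms
  | .fwd E => [.fwd E]
  | .bwd E => [.bwd E]

/-- A label read as the list of its top-level concatenation factors. -/
def Lab.factors : Lab → List Lab
  | .comp α β => α.factors ++ β.factors
  | .atom a => [.atom a]
  | .over α => [.over α]
  | .under α => [.under α]
  | .fwd E => [.fwd E]
  | .bwd E => [.bwd E]

/-- The substitution rules of λ_lca, applied at the root. -/
inductive SigmaLca : Term → Term → Prop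
  | lam {y M α N x} :
      SigmaLca (.sub (.lam y M α) N x) (.lam y (.sub M N x) α)
  | app1 {M N α P x} : x ∈ FV M →
      SigmaLca (.sub (.app M N α) P x) (.app (.sub M P x) N α)
  | app2 {M N α P x} : x ∈ FV N →
      SigmaLca (.sub (.app M N α) P x) (.app M (.sub N (pre (.fwd .quest) P) x) α)
  | cpy1 {x y z M N} :
      SigmaLca (.sub (.dup x y z M) N x)
        (.sub (.sub M (pre (.fwd .R) N) y) (pre (.fwd .S) N) z)
  | cpy2 {x y z M N x'} : x' ≠ x →
      SigmaLca (.sub (.dup x y z M) N x') (.dup x y z (.sub M N x'))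
  | ers1 {x M N} :
      SigmaLca (.sub (.eps x M) N x) M
  | ers2 {x M N x'} : x' ≠ x →
      SigmaLca (.sub (.eps x M) N x') (.eps x (.sub M N x'))
  | var {x α N} :
      SigmaLca (.sub (.var x α) N x) (pre (.comp α (.fwd .D)) N)

/-- The Beta rule of λ_lca, applied at the root:
((λx.M)^α N)^β → β·overline(α) • M[underline(α^r)·←! • N / x],
provided the argument part is closed. -/
inductive BetaLca : Term → Term → Prop
  | beta {x M α N β} : FV N = ∅ →
      BetaLca (.app (.lam x M α) N β)
        (pre (.comp β (.over α))
          (.sub M (pre (.comp (.under (Lab.rev α)) (.bwd .bang)) N) x))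

/-- One-step reduction →_lca. -/
def LcaStep : Term → Term → Prop := Ctx (fun M N => BetaLca M N ∨ SigmaLca M N)

/-- All substitution subterms have closed argument (structural version). -/
def CS : Term → Prop
  | .var _ _ => True
  | .lam _ M _ => CS M
  | .app M N _ => CS M ∧ CS N
  | .eps _ M => CS M
  | .dup _ _ _ M => CS M
  | .sub M N _ => FV N = ∅ ∧ CS M ∧ CS N

lemma FV_pre (β : Lab) (T : Term) : FV (pre β T) = FV T := by
  induction T <;> simp [pre, FV, *]

lemma CS_pre (β : Lab) (T : Term) : CS (pre β T) ↔ CS T := by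
  induction T <;> simp [pre, CS, FV_pre, *]

lemma Wf_pre (β : Lab) (T : Term) : Wf (pre β T) ↔ Wf T := by
  induction T <;> simp [pre, Wf, FV_pre, *]

lemma closed_of_CS {s T : Term} (hs : Subterm s T) :
    CS T → ∀ M N x, s = .sub M N x → FV N = ∅ := by
  induction hs with
  | refl => intro h M N x he; subst he; exact h.1
  | lam h ih => intro hc; exact ih hc
  | appL h ih => intro hc; exact ih hc.1
  | appR h ih => intro hc; exact ih hc.2
  | eps h ih => intro hc; exact ih hc
  | dup h ih => intro hc; exact ih hc
  | subL h ih => intro hc; exact ih hc.2.1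
  | subR h ih => intro hc; exact ih hc.2.2

lemma CS_of_noSub {T : Term} (h : ∀ M N x, ¬ Subterm (Term.sub M N x) T) : CS T := by
  induction T with
  | var => trivial
  | lam x M α ih =>
    exact ih fun M' N' x' hs => h M' N' x' (Subterm.lam hs)
  | app M N α ihM ihN =>
    exact ⟨ihM fun M' N' x' hs => h M' N' x' (Subterm.appL hs),
      ihN fun M' N' x' hs => h M' N' x' (Subterm.appR hs)⟩
  | eps x M ih => exact ih fun M' N' x' hs => h M' N' x' (Subterm.eps hs)
  | dup x y z M ih => exact ih fun M' N' x' hs => h M' N' x' (Subterm.dup hs)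
  | sub M N x ihM ihN => exact absurd (Subterm.refl _) (h M N x)

lemma root_preserve {T T' : Term} (h : BetaLca T T' ∨ SigmaLca T T')
    (hcs : CS T) (hwf : Wf T) : CS T' ∧ Wf T' ∧ FV T' = FV T := by
  rcases h with h | h
  · rcases h with @⟨x, M, α, N, β, hN⟩
    obtain ⟨hML, hNc⟩ := hcs
    obtain ⟨hint, ⟨hxM, hwM⟩, hwN⟩ := hwf
    refine ⟨(CS_pre _ _).mpr ⟨by simp [FV_pre, hN], hML, (CS_pre _ _).mpr hNc⟩,
      (Wf_pre _ _).mpr ⟨hxM, by simp [FV_pre, hN], hwM, (Wf_pre _ _).mpr hwN⟩, ?_⟩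
    simp [FV, FV_pre, hN]
  · cases h with
    | @lam y M α N x =>
      obtain ⟨hN, hM, hNc⟩ := hcs
      obtain ⟨hx, _, ⟨hy, hwM⟩, hwN⟩ := hwf
      simp only [FV, Finset.mem_sdiff, Finset.mem_singleton] at hx
      refine ⟨⟨hN, hM, hNc⟩, ?_, ?_⟩
      · refine ⟨?_, hx.1, by simp [hN], hwM, hwN⟩
        simp [FV, hN, hy, Ne.symm hx.2]
      · simp only [FV, hN]
        ext a; simp; tauto
    | @app1 M N α P x hxM =>
      obtain ⟨hP, ⟨hM, hNc⟩, hPc⟩ := hcs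
      obtain ⟨_, _, ⟨hMN, hwM, hwN⟩, hwP⟩ := hwf
      have hxN : x ∉ FV N := by
        intro hxN
        have := Finset.eq_empty_iff_forall_notMem.mp hMN x
        exact this (Finset.mem_inter.mpr ⟨hxM, hxN⟩)
      refine ⟨⟨⟨hP, hM, hPc⟩, hNc⟩, ?_, ?_⟩
      · refine ⟨?_, ⟨hxM, by simp [hP], hwM, hwP⟩, hwN⟩
        simp only [FV, hP, Finset.union_empty]
        rw [Finset.eq_empty_iff_forall_notMem] at hMN ⊢
        intro a ha
        simp only [Finset.mem_inter, Finset.mem_sdiff] at ha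
        exact hMN a (Finset.mem_inter.mpr ⟨ha.1.1, ha.2⟩)
      · simp only [FV, hP]
        ext a; simp; by_cases hax : a = x <;> simp [hax, hxN] <;> tauto
    | @app2 M N α P x hxN =>
      obtain ⟨hP, ⟨hM, hNc⟩, hPc⟩ := hcs
      obtain ⟨_, _, ⟨hMN, hwM, hwN⟩, hwP⟩ := hwf
      have hxM : x ∉ FV M := by
        intro hxM
        have := Finset.eq_empty_iff_forall_notMem.mp hMN x
        exact this (Finset.mem_inter.mpr ⟨hxM, hxN⟩)
      refine ⟨⟨hM, ⟨by simp [FV_pre, hP], hNc, (CS_pre _ _).mpr hPc⟩⟩, ?_, ?_⟩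
      · refine ⟨?_, hwM, ⟨hxN, by simp [FV_pre, hP], hwN, (Wf_pre _ _).mpr hwP⟩⟩
        simp only [FV, FV_pre, hP, Finset.union_empty]
        rw [Finset.eq_empty_iff_forall_notMem] at hMN ⊢
        intro a ha
        simp only [Finset.mem_inter, Finset.mem_sdiff] at ha
        exact hMN a (Finset.mem_inter.mpr ⟨ha.1, ha.2.1⟩)
      · simp only [FV, FV_pre, hP]
        ext a; simp; by_cases hax : a = x <;> simp [hax, hxM] <;> tauto
    | @cpy1 x y z M N =>
      obtain ⟨hN, hM, hNc⟩ := hcs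
      obtain ⟨_, _, ⟨hxM, hyz, hyM, hzM, hwM⟩, hwN⟩ := hwf
      refine ⟨⟨by simp [FV_pre, hN], ⟨by simp [FV_pre, hN], hM, by simp [CS_pre, hNc]⟩,
        by simp [CS_pre, hNc]⟩, ?_, ?_⟩
      · refine ⟨?_, by simp [FV_pre, hN], ⟨hyM, by simp [FV_pre, hN], hwM,
          (Wf_pre _ _).mpr hwN⟩, (Wf_pre _ _).mpr hwN⟩
        simp [FV, FV_pre, hN, hzM, Ne.symm hyz]
      · simp only [FV, FV_pre, hN]
        ext a; simp
        constructor
        · rintro ⟨⟨ha, hay⟩, haz⟩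
          exact ⟨Or.inr ⟨ha, hay, haz⟩, fun h => hxM (h ▸ ha)⟩
        · rintro ⟨rfl | ⟨ha, hay, haz⟩, hax⟩
          · exact absurd rfl hax
          · tauto
    | @cpy2 x y z M N x' hx' =>
      obtain ⟨hN, hM, hNc⟩ := hcs
      obtain ⟨hx'mem, _, ⟨hxM, hyz, hyM, hzM, hwM⟩, hwN⟩ := hwf
      simp only [FV, Finset.mem_union, Finset.mem_sdiff, Finset.mem_singleton,
        Finset.mem_insert] at hx'mem
      have hx'M : x' ∈ FV M ∧ x' ≠ y ∧ x' ≠ z := by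
        rcases hx'mem with ⟨ha, hb⟩ | h
        · push_neg at hb; exact ⟨ha, hb⟩
        · exact absurd h hx'
      refine ⟨⟨hN, hM, hNc⟩, ?_, ?_⟩
      · refine ⟨?_, hyz, ?_, ?_, hx'M.1, by simp [hN], hwM, hwN⟩
        · simp [FV, hN, hxM]
        · simp [FV, hN, hyM, Ne.symm hx'M.2.1]
        · simp [FV, hN, hzM, Ne.symm hx'M.2.2]
      · simp only [FV, hN]
        ext a; simp
        constructor
        · rintro (rfl | ⟨⟨ha, hax'⟩, hay, haz⟩)
          · exact ⟨Or.inl rfl, fun h => hx' h.symm⟩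
          · tauto
        · rintro ⟨rfl | ⟨ha, hay, haz⟩, hax'⟩ <;> tauto
    | @ers1 x M N =>
      obtain ⟨hN, hM, hNc⟩ := hcs
      obtain ⟨_, _, ⟨hxM, hwM⟩, hwN⟩ := hwf
      refine ⟨hM, hwM, ?_⟩
      simp only [FV, hN]
      ext a; simp
      constructor
      · intro ha; exact ⟨Or.inr ha, fun h => hxM (h ▸ ha)⟩
      · rintro ⟨rfl | ha, hax⟩
        · exact absurd rfl hax
        · exact ha
    | @ers2 x M N x' hx' =>
      obtain ⟨hN, hM, hNc⟩ := hcs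
      obtain ⟨hx'mem, _, ⟨hxM, hwM⟩, hwN⟩ := hwf
      simp only [FV, Finset.mem_union, Finset.mem_sdiff, Finset.mem_singleton] at hx'mem
      have hx'M : x' ∈ FV M := by rcases hx'mem with h | h; exacts [h, absurd h hx']
      refine ⟨⟨hN, hM, hNc⟩, ⟨?_, hx'M, by simp [hN], hwM, hwN⟩, ?_⟩
      · simp only [FV, hN, Finset.union_empty, Finset.mem_sdiff, Finset.mem_singleton]
        rintro ⟨hx, -⟩; exact hxM hx
      simp only [FV, hN]
      ext a; simp
      constructor
      · rintro (rfl | ⟨ha, hax'⟩)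
        · exact ⟨Or.inl rfl, fun h => hx' h.symm⟩
        · tauto
      · rintro ⟨rfl | ha, hax'⟩ <;> tauto
    | @var x α N =>
      obtain ⟨hN, _, hNc⟩ := hcs
      obtain ⟨_, _, _, hwN⟩ := hwf
      exact ⟨(CS_pre _ _).mpr hNc, (Wf_pre _ _).mpr hwN, by simp [FV, FV_pre, hN]⟩

lemma step_preserve {T T' : Term} (h : LcaStep T T') (hcs : CS T) (hwf : Wf T) :
    CS T' ∧ Wf T' ∧ FV T' = FV T := by
  induction h with
  | base h => exact root_preserve h hcs hwf
  | lam h ih =>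
    obtain ⟨hc, hw, hfv⟩ := ih hcs hwf.2
    exact ⟨hc, ⟨hfv ▸ hwf.1, hw⟩, by simp [FV, hfv]⟩
  | appL h ih =>
    obtain ⟨hc, hw, hfv⟩ := ih hcs.1 hwf.2.1
    exact ⟨⟨hc, hcs.2⟩, ⟨hfv ▸ hwf.1, hw, hwf.2.2⟩, by simp [FV, hfv]⟩
  | appR h ih =>
    obtain ⟨hc, hw, hfv⟩ := ih hcs.2 hwf.2.2
    exact ⟨⟨hcs.1, hc⟩, ⟨hfv ▸ hwf.1, hwf.2.1, hw⟩, by simp [FV, hfv]⟩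
  | eps h ih =>
    obtain ⟨hc, hw, hfv⟩ := ih hcs hwf.2
    exact ⟨hc, ⟨hfv ▸ hwf.1, hw⟩, by simp [FV, hfv]⟩
  | dup h ih =>
    obtain ⟨hc, hw, hfv⟩ := ih hcs hwf.2.2.2.2
    exact ⟨hc, ⟨hfv ▸ hwf.1, hwf.2.1, hfv ▸ hwf.2.2.1, hfv ▸ hwf.2.2.2.1, hw⟩,
      by simp [FV, hfv]⟩
  | subL h ih =>
    obtain ⟨hc, hw, hfv⟩ := ih hcs.2.1 hwf.2.2.1
    exact ⟨⟨hcs.1, hc, hcs.2.2⟩, ⟨hfv ▸ hwf.1, hfv ▸ hwf.2.1, hw, hwf.2.2.2⟩,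
      by simp [FV, hfv]⟩
  | subR h ih =>
    obtain ⟨hc, hw, hfv⟩ := ih hcs.2.2 hwf.2.2.2
    exact ⟨⟨hfv ▸ hcs.1, hcs.2.1, hc⟩, ⟨hwf.1, hfv ▸ hwf.2.1, hwf.2.2.1, hw⟩,
      by simp [FV, hfv]⟩

/-- every substitution subterm arising during λ_lca reduction
of an initialised term (which in particular contains no substitution
subterms) is closed; moreover reduction preserves the linearity constraints
and the free variables. -/

theorem lca_substitutions_closed (T T' : Term)
    (hInit : Initialised T)
    (hNoSub : ∀ M N x, ¬ Subterm (Term.sub M N x) T)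
    (hWf : Wf T)
    (hred : Relation.ReflTransGen LcaStep T T') :
    (∀ M N x, Subterm (Term.sub M N x) T' → FV N = ∅) ∧
    Wf T' ∧ FV T' = FV T := by
  have key : CS T' ∧ Wf T' ∧ FV T' = FV T := by
    induction hred with
    | refl => exact ⟨CS_of_noSub hNoSub, hWf, rfl⟩
    | tail _ hstep ih =>
      obtain ⟨hc, hw, hfv⟩ := ih
      obtain ⟨hc', hw', hfv'⟩ := step_preserve hstep hc hw
      exact ⟨hc', hw', hfv'.trans hfv⟩
  exact ⟨fun M N x hs => closed_of_CS hs key.1 M N x rfl, key.2⟩
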